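/- Let A be a Z-graded ring such that A^{≥0} admits a regular sequence (r, r̃) of central homogeneous elements of positive degree. Then A ≅ A^{≥0} ⊕ A^{<0} as A^{≥0}-bimodules, with A^{<0} an A^{≥0}-subbimodule that is also a quotient bimodule. -/

import Mathlib

open DirectSum

/-- The subgroup of `A` of elements supported in degrees belonging to `S`. -/
def gradedPart {A : Type} [Ring A] (𝒜 : ℤ → AddSubgroup A) (S : Set ℤ) : AddSubgroup A :=
  ⨆ i ∈ S, 𝒜 i

set_option linter.unusedSectionVars false


section Aux

variable {A : Type} [Ring A] (𝒜 : ℤ → AddSubgroup A) [GradedRing 𝒜]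

lemma mem_gradedPart_of_mem {S : Set ℤ} {i : ℤ} (hi : i ∈ S) {x : A} (hx : x ∈ 𝒜 i) :
    x ∈ gradedPart 𝒜 S :=
  (le_iSup₂ (f := fun i (_ : i ∈ S) => 𝒜 i) i hi) hx

lemma gradedPart_decompose_eq_zero {S : Set ℤ} {x : A} (hx : x ∈ gradedPart 𝒜 S)
    {i : ℤ} (hi : i ∉ S) : (decompose 𝒜 x i : A) = 0 := by
  let K : AddSubgroup A :=
    { carrier := {x | ∀ j ∉ S, (decompose 𝒜 x j : A) = 0}
      zero_mem' := by intro j _; simp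
      add_mem' := by
        intro a b ha hb j hj
        rw [decompose_add]
        simp only [DirectSum.add_apply, AddSubgroup.coe_add]
        rw [ha j hj, hb j hj, add_zero]
      neg_mem' := by
        intro a ha j hj
        rw [decompose_neg]
        have : ((-(decompose 𝒜 a)) j : A) = -((decompose 𝒜 a j : A)) := rfl
        rw [this, ha j hj, neg_zero] }
  have : gradedPart 𝒜 S ≤ K := by
    apply iSup₂_le
    intro k hk x hx j hj
    have hne : j ≠ k := fun h => hj (h ▸ hk)
    rw [decompose_of_mem_ne 𝒜 hx hne.symm]
  exact this hx i hi

lemma gradedPart_induction {S : Set ℤ} {C : A → Prop} {x : A} (hx : x ∈ gradedPart 𝒜 S)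
    (hmem : ∀ i ∈ S, ∀ a ∈ 𝒜 i, C a) (h0 : C 0) (hadd : ∀ a b, C a → C b → C (a + b)) :
    C x := by
  rw [gradedPart, iSup_subtype'] at hx
  exact AddSubgroup.iSup_induction (x := x) _ hx (fun i a ha => hmem i.1 i.2 a ha) h0 hadd

end Aux

section Main

variable {A : Type} [Ring A] (𝒜 : ℤ → AddSubgroup A) [GradedRing 𝒜]
variable {r rt : A} {d dt : ℤ}

lemma cancel_pow (hd : 0 < d) (hr : r ∈ 𝒜 d)
    (hreg1 : ∀ a ∈ gradedPart 𝒜 {i | 0 ≤ i}, r * a = 0 → a = 0) :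
    ∀ (p : ℕ) (k : ℤ), 0 ≤ k → ∀ x ∈ 𝒜 k, r ^ p * x = 0 → x = 0 := by
  intro p
  induction p with
  | zero => intro k hk x hx h; simpa using h
  | succ p ih =>
    intro k hk x hx h
    rw [pow_succ', mul_assoc] at h
    have hmem : r ^ p * x ∈ 𝒜 (p • d + k) :=
      SetLike.mul_mem_graded (SetLike.pow_mem_graded p hr) hx
    have hdeg : p • d + k ∈ {i : ℤ | 0 ≤ i} := by
      have h2 : (0:ℤ) ≤ p • d := nsmul_nonneg hd.le p
      simp only [Set.mem_setOf_eq]; linarith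
    have := hreg1 _ (mem_gradedPart_of_mem 𝒜 hdeg hmem) h
    exact ih k hk x hx this

lemma key_pow_zero (hd : 0 < d) (hdt : 0 < dt) (hr : r ∈ 𝒜 d) (hrt : rt ∈ 𝒜 dt)
    (hcr : ∀ x : A, r * x = x * r) (hcrt : ∀ x : A, rt * x = x * rt)
    (hreg2 : ∀ a ∈ gradedPart 𝒜 {i | 0 ≤ i},
      (∃ b ∈ gradedPart 𝒜 {i | 0 ≤ i}, rt * a = r * b) →
      ∃ c ∈ gradedPart 𝒜 {i | 0 ≤ i}, a = r * c) :
    ∀ (p : ℕ) (j : ℤ), j < 0 → ∀ b ∈ 𝒜 j, 0 ≤ p • d + j → r ^ p * b = 0 := by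
  intro p
  induction p with
  | zero => intro j hj b hb hdeg; simp at hdeg; omega
  | succ p ih =>
    intro j hj b hb hdeg
    by_cases hcase : 0 ≤ p • d + j
    · rw [pow_succ', mul_assoc, ih j hj b hb hcase, mul_zero]
    · -- the core case
      push_neg at hcase
      have hpd : (0:ℤ) ≤ p • d := nsmul_nonneg hd.le p
      have hsucc : ((p+1) • d : ℤ) = p • d + d := by rw [succ_nsmul]
      set ε : ℤ := (p+1) • d + j with hε
      have hε0 : 0 ≤ ε := hdeg
      have hεd : ε < d := by rw [hε, hsucc]; linarith
      set u : A := r ^ (p+1) * b with hu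
      have humem : u ∈ 𝒜 ε :=
        SetLike.mul_mem_graded (SetLike.pow_mem_graded (p+1) hr) hb
      set q : ℕ := j.natAbs with hq
      have hqj : (q : ℤ) = -j := by omega
      have hqd : 0 ≤ q • dt + j := by
        have h1 : (q:ℤ) * 1 ≤ (q:ℤ) * dt :=
          mul_le_mul_of_nonneg_left hdt (Int.natCast_nonneg q)
        have : (q:ℤ) ≤ q • dt := by rw [nsmul_eq_mul]; linarith
        omega
      have hcrn : ∀ (n : ℕ) (x : A), r ^ n * x = x * r ^ n :=
        fun n x => ((Commute.pow_left (hcr x) n))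
      have hcrtn : ∀ (n : ℕ) (x : A), rt ^ n * x = x * rt ^ n :=
        fun n x => ((Commute.pow_left (hcrt x) n))
      have chain : ∀ k : ℕ, ∃ c ∈ gradedPart 𝒜 {i | 0 ≤ i}, rt ^ (q - k) * u = r * c := by
        intro k
        induction k with
        | zero =>
          refine ⟨r ^ p * (rt ^ q * b), ?_, ?_⟩
          · have hmem : r ^ p * (rt ^ q * b) ∈ 𝒜 (p • d + (q • dt + j)) :=
              SetLike.mul_mem_graded (SetLike.pow_mem_graded p hr)
                (SetLike.mul_mem_graded (SetLike.pow_mem_graded q hrt) hb)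
            exact mem_gradedPart_of_mem 𝒜 (by simp only [Set.mem_setOf_eq]; linarith) hmem
          · have h1 : rt ^ q * u = r ^ (p+1) * (rt ^ q * b) := by
              rw [hu, ← mul_assoc, hcrtn q (r ^ (p+1)), mul_assoc]
            rw [Nat.sub_zero, h1, pow_succ', mul_assoc]
        | succ k ihk =>
          obtain ⟨c, hc, hck⟩ := ihk
          rcases Nat.eq_zero_or_eq_succ_pred (q - k) with h0 | hm
          · have : q - (k+1) = 0 := by omega
            rw [this]; rw [h0] at hck; exact ⟨c, hc, hck⟩
          · set m := (q - k) - 1 with hmdef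
            have hqk : q - k = m + 1 := by omega
            have hqk1 : q - (k+1) = m := by omega
            have hmem : rt ^ m * u ∈ 𝒜 (m • dt + ε) :=
              SetLike.mul_mem_graded (SetLike.pow_mem_graded m hrt) humem
            have hdtm : (0:ℤ) ≤ m • dt := nsmul_nonneg hdt.le m
            have hin : rt ^ m * u ∈ gradedPart 𝒜 {i | 0 ≤ i} :=
              mem_gradedPart_of_mem 𝒜 (by simp only [Set.mem_setOf_eq]; linarith) hmem
            have heq : rt * (rt ^ m * u) = r * c := by
              rw [← mul_assoc, ← pow_succ', ← hqk, hck]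
            obtain ⟨c', hc', hcc'⟩ := hreg2 _ hin ⟨c, hc, heq⟩
            rw [hqk1]
            exact ⟨c', hc', hcc'⟩
      obtain ⟨c, hc, hck⟩ := chain q
      rw [Nat.sub_self, pow_zero, one_mul] at hck
      -- now u = r * c with u homogeneous of degree ε, 0 ≤ ε < d, c supported in degrees ≥ 0
      have hu0 : u = 0 := by
        have h1 : (decompose 𝒜 u ε : A) = u := DirectSum.decompose_of_mem_same 𝒜 humem
        have h2 : (decompose 𝒜 (r * c) (d + (ε - d)) : A) = r * (decompose 𝒜 c (ε - d) : A) :=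
          DirectSum.coe_decompose_mul_add_of_left_mem 𝒜 hr
        have h3 : (decompose 𝒜 c (ε - d) : A) = 0 :=
          gradedPart_decompose_eq_zero 𝒜 hc (by simp only [Set.mem_setOf_eq]; push_neg; linarith)
        have h4 : d + (ε - d) = ε := by ring
        rw [h4] at h2
        rw [← h1, hck, h2, h3, mul_zero]
      exact hu0

end Main


set_option maxHeartbeats 1000000
set_option synthInstance.maxHeartbeats 400000

/-- If the non-negative part `A^{≥0}` of a `ℤ`-graded ring `A` admits a
regular sequence `(r, r̃)` of central homogeneous elements of positive degree, then
`A ≅ A^{≥0} ⊕ A^{<0}` as `A^{≥0}`-bimodules: both `A^{≥0}` and `A^{<0}` are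
`A^{≥0}`-subbimodules of `A` (so `A^{<0}` is simultaneously a subbimodule and, via the
resulting projection, a quotient bimodule of `A`), and `A` is their internal direct sum. -/
theorem decomposition_as_bimodules {A : Type} [Ring A]
    (𝒜 : ℤ → AddSubgroup A) [GradedRing 𝒜]
    (r rt : A) (d dt : ℤ) (hd : 0 < d) (hdt : 0 < dt)
    (hr : r ∈ 𝒜 d) (hrt : rt ∈ 𝒜 dt)
    (hcr : ∀ x : A, r * x = x * r) (hcrt : ∀ x : A, rt * x = x * rt)
    (hreg1 : ∀ a ∈ gradedPart 𝒜 {i | 0 ≤ i}, r * a = 0 → a = 0)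
    (hreg2 : ∀ a ∈ gradedPart 𝒜 {i | 0 ≤ i},
      (∃ b ∈ gradedPart 𝒜 {i | 0 ≤ i}, rt * a = r * b) →
      ∃ c ∈ gradedPart 𝒜 {i | 0 ≤ i}, a = r * c) :
    -- `A^{<0}` is an `A^{≥0}`-subbimodule of `A`
    (∀ a ∈ gradedPart 𝒜 {i | 0 ≤ i}, ∀ b ∈ gradedPart 𝒜 {i | i < 0},
      a * b ∈ gradedPart 𝒜 {i | i < 0} ∧ b * a ∈ gradedPart 𝒜 {i | i < 0}) ∧
    -- `A = A^{≥0} ⊕ A^{<0}` as additive groups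
    (∀ x : A, ∃ y ∈ gradedPart 𝒜 {i | 0 ≤ i}, ∃ z ∈ gradedPart 𝒜 {i | i < 0},
      x = y + z) ∧
    (∀ y ∈ gradedPart 𝒜 {i | 0 ≤ i}, ∀ z ∈ gradedPart 𝒜 {i | i < 0},
      y + z = 0 → y = 0 ∧ z = 0) := by
  classical
  -- step 1: homogeneous case of the bimodule property
  have hom_case : ∀ (m : ℤ), 0 ≤ m → ∀ a ∈ 𝒜 m, ∀ (j : ℤ), j < 0 → ∀ b ∈ 𝒜 j,
      a * b ∈ gradedPart 𝒜 {i | i < 0} ∧ b * a ∈ gradedPart 𝒜 {i | i < 0} := by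
    intro m hm a ha j hj b hb
    by_cases hmj : 0 ≤ m + j
    · -- in this case the products vanish
      set p : ℕ := j.natAbs with hp
      have hpj : (p:ℤ) = -j := by omega
      have hpd : 0 ≤ p • d + j := by
        have h1 : (p:ℤ) * 1 ≤ (p:ℤ) * d :=
          mul_le_mul_of_nonneg_left hd (Int.natCast_nonneg p)
        have : (p:ℤ) ≤ p • d := by rw [nsmul_eq_mul]; linarith
        omega
      have hrb : r ^ p * b = 0 :=
        key_pow_zero 𝒜 hd hdt hr hrt hcr hcrt hreg2 p j hj b hb hpd
      have hab : a * b = 0 := by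
        have h1 : r ^ p * (a * b) = 0 := by
          rw [← mul_assoc, Commute.pow_left (hcr a) p, mul_assoc, hrb, mul_zero]
        exact cancel_pow 𝒜 hd hr hreg1 p (m + j) hmj (a * b)
          (SetLike.mul_mem_graded ha hb) h1
      have hba : b * a = 0 := by
        have h1 : r ^ p * (b * a) = 0 := by
          rw [← mul_assoc, hrb, zero_mul]
        exact cancel_pow 𝒜 hd hr hreg1 p (j + m) (by omega) (b * a)
          (SetLike.mul_mem_graded hb ha) h1
      rw [hab, hba]
      exact ⟨zero_mem _, zero_mem _⟩
    · push_neg at hmj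
      exact ⟨mem_gradedPart_of_mem 𝒜 (by simpa using hmj) (SetLike.mul_mem_graded ha hb),
        mem_gradedPart_of_mem 𝒜 (by simp only [Set.mem_setOf_eq]; omega)
          (SetLike.mul_mem_graded hb ha)⟩
  refine ⟨?_, ?_, ?_⟩
  · -- bimodule property in general, by bilinearity
    intro a ha b hb
    refine gradedPart_induction 𝒜 ha (C := fun a =>
      a * b ∈ gradedPart 𝒜 {i | i < 0} ∧ b * a ∈ gradedPart 𝒜 {i | i < 0}) ?_ ?_ ?_
    · intro m hm a' ha'
      refine gradedPart_induction 𝒜 hb (C := fun b =>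
        a' * b ∈ gradedPart 𝒜 {i | i < 0} ∧ b * a' ∈ gradedPart 𝒜 {i | i < 0}) ?_ ?_ ?_
      · intro j hj b' hb'
        exact hom_case m hm a' ha' j hj b' hb'
      · simp [zero_mem]
      · intro x y hx hy
        rw [mul_add, add_mul]
        exact ⟨add_mem hx.1 hy.1, add_mem hx.2 hy.2⟩
    · simp [zero_mem]
    · intro x y hx hy
      rw [add_mul, mul_add]
      exact ⟨add_mem hx.1 hy.1, add_mem hx.2 hy.2⟩
  · -- existence of the decomposition
    intro x
    refine ⟨∑ i ∈ (decompose 𝒜 x).support.filter (fun i => 0 ≤ i), ((decompose 𝒜 x) i : A),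
      ?_, ∑ i ∈ (decompose 𝒜 x).support.filter (fun i => ¬ 0 ≤ i), ((decompose 𝒜 x) i : A),
      ?_, ?_⟩
    · refine sum_mem fun i hi => ?_
      exact mem_gradedPart_of_mem 𝒜
        (show i ∈ {i : ℤ | 0 ≤ i} from (Finset.mem_filter.mp hi).2) ((decompose 𝒜 x) i).2
    · refine sum_mem fun i hi => ?_
      have := (Finset.mem_filter.mp hi).2
      exact mem_gradedPart_of_mem 𝒜 (by simp only [Set.mem_setOf_eq]; omega)
        ((decompose 𝒜 x) i).2
    · rw [Finset.sum_filter_add_sum_filter_not]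
      exact (DirectSum.sum_support_decompose 𝒜 x).symm
  · -- uniqueness
    intro y hy z hz h
    have hdec : ∀ i : ℤ, ((decompose 𝒜 y) i : A) + ((decompose 𝒜 z) i : A) = 0 := by
      intro i
      have : decompose 𝒜 (y + z) = 0 := by rw [h, decompose_zero]
      have h2 : ((decompose 𝒜 (y + z)) i : A) = 0 := by rw [this]; rfl
      rwa [decompose_add, DirectSum.add_apply, AddSubgroup.coe_add] at h2
    have hy0 : y = 0 := by
      rw [← DirectSum.sum_support_decompose 𝒜 y]
      refine Finset.sum_eq_zero fun i _ => ?_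
      by_cases hi : 0 ≤ i
      · have hzi : ((decompose 𝒜 z) i : A) = 0 :=
          gradedPart_decompose_eq_zero 𝒜 hz (by simp only [Set.mem_setOf_eq]; omega)
        have := hdec i
        rw [hzi, add_zero] at this
        exact this
      · exact gradedPart_decompose_eq_zero 𝒜 hy (by simpa using hi)
    refine ⟨hy0, ?_⟩
    rw [hy0, zero_add] at h
    exact h
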